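/- arXiv:1501.04251 — 3 statements merged into one kernel-verified Lean document; each statement's English description precedes it below -/
import Mathlib

section
/- Let F ∈ B_c, t > 0 and u(x,t) = ∫_ℝ F(x−ξ) Θ_t'(ξ) dξ. Then sup_{x∈ℝ} |u(x,t)| ≤ ‖F‖'_∞ / (2√(πt)). Moreover the constant is sharp: for every t > 0 and every c < 1/(2√(πt)) there exists a nonzero F ∈ B_c such that sup_{x∈ℝ} |u(x,t)| > c · ‖F‖'_∞. -/
open MeasureTheory Filter Topology

/-- The Gauss–Weierstrass heat kernel `Θ_t(x) = (4πt)^(−1/2) exp(−x²/(4t))` for `t > 0`. -/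
noncomputable def heatK (t x : ℝ) : ℝ :=
  (Real.sqrt (4 * Real.pi * t))⁻¹ * Real.exp (-x ^ 2 / (4 * t))

/-- Spatial derivative of the heat kernel: `Θ_t'(ξ) = −ξ Θ_t(ξ)/(2t)`. -/
noncomputable def heatK' (t x : ℝ) : ℝ := -x * heatK t x / (2 * t)

/-- `F ∈ B_c`: continuous, vanishing at `−∞`, with a finite limit at `+∞`. -/
def memBc (F : ℝ → ℝ) : Prop :=
  Continuous F ∧ Tendsto F atBot (nhds (0 : ℝ)) ∧ ∃ L : ℝ, Tendsto F atTop (nhds L)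

/-- `‖F‖'_∞ = sup_{x<y} |F(x) − F(y)|`. -/
noncomputable def normBc (F : ℝ → ℝ) : ℝ :=
  sSup {r : ℝ | ∃ x y : ℝ, x < y ∧ r = |F x - F y|}

/-- Heat convolution `u(x,t) = ∫ F(x−ξ) Θ_t'(ξ) dξ` of the distribution `f = F'`. -/
noncomputable def heatConv (F : ℝ → ℝ) (t x : ℝ) : ℝ := ∫ ξ : ℝ, F (x - ξ) * heatK' t ξ

open Set

lemma heatK_pos {t : ℝ} (ht : 0 < t) (x : ℝ) : 0 < heatK t x := by
  have := Real.pi_pos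
  unfold heatK
  positivity

lemma heatK_neg (t x : ℝ) : heatK t (-x) = heatK t x := by
  unfold heatK; rw [neg_pow]; norm_num

lemma heatK'_neg (t x : ℝ) : heatK' t (-x) = -heatK' t x := by
  unfold heatK'; rw [heatK_neg]; ring

lemma heatK_hasDerivAt {t : ℝ} (ht : 0 < t) (x : ℝ) :
    HasDerivAt (heatK t) (heatK' t x) x := by
  have h1 : HasDerivAt (fun x : ℝ => -x ^ 2 / (4 * t)) (-(2 * x ^ 1) / (4 * t)) x :=
    ((hasDerivAt_pow 2 x).neg).div_const (4 * t)
  have h2 := (h1.exp).const_mul (Real.sqrt (4 * Real.pi * t))⁻¹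
  refine h2.congr_deriv ?_
  unfold heatK' heatK
  field_simp
  ring

lemma heatK_tendsto_atTop {t : ℝ} (ht : 0 < t) : Tendsto (heatK t) atTop (𝓝 0) := by
  have h1 : Tendsto (fun x : ℝ => x ^ 2) atTop atTop := tendsto_pow_atTop two_ne_zero
  have h2 : Tendsto (fun x : ℝ => -x ^ 2 / (4 * t)) atTop atBot := by
    have := tendsto_neg_atTop_atBot.comp (h1.atTop_div_const (by positivity : (0:ℝ) < 4 * t))
    simpa [Function.comp_def, neg_div] using this
  have h3 := (Real.tendsto_exp_atBot.comp h2).const_mul (Real.sqrt (4 * Real.pi * t))⁻¹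
  simp only [Function.comp_def, mul_zero] at h3
  exact h3

lemma heatK_tendsto_atBot {t : ℝ} (ht : 0 < t) : Tendsto (heatK t) atBot (𝓝 0) := by
  have h := (heatK_tendsto_atTop ht).comp tendsto_neg_atBot_atTop
  have : (heatK t ∘ fun x => -x) = heatK t := by
    funext x; simp [Function.comp_def, heatK_neg]
  rwa [this] at h

lemma heatK_key {t : ℝ} (ht : 0 < t) {a : ℝ} (ha : 0 ≤ a) :
    IntegrableOn (fun ξ => ξ * heatK t ξ / (2 * t)) (Ioi a) ∧
      ∫ ξ in Ioi a, ξ * heatK t ξ / (2 * t) = heatK t a := by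
  have hderiv : ∀ x ∈ Ici a, HasDerivAt (fun y => -heatK t y) (x * heatK t x / (2 * t)) x := by
    intro x _
    have := (heatK_hasDerivAt ht x).neg
    refine this.congr_deriv ?_
    unfold heatK'
    ring
  have hpos : ∀ x ∈ Ioi a, 0 ≤ x * heatK t x / (2 * t) := by
    intro x hx
    have hx0 : 0 < x := lt_of_le_of_lt ha hx
    have := heatK_pos ht x
    positivity
  have htend : Tendsto (fun y => -heatK t y) atTop (𝓝 (-0)) := (heatK_tendsto_atTop ht).neg
  rw [neg_zero] at htend
  refine ⟨integrableOn_Ioi_deriv_of_nonneg' hderiv hpos htend, ?_⟩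
  rw [integral_Ioi_of_hasDerivAt_of_nonneg' hderiv hpos htend]
  ring

lemma heatK'_integrable {t : ℝ} (ht : 0 < t) : Integrable (heatK' t) := by
  have h4t : (0 : ℝ) < 1 / (4 * t) := by positivity
  have h1 := (integrable_mul_exp_neg_mul_sq h4t).const_mul
    (-(Real.sqrt (4 * Real.pi * t))⁻¹ / (2 * t))
  apply h1.congr
  filter_upwards with ξ
  have : -(1 / (4 * t)) * ξ ^ 2 = -ξ ^ 2 / (4 * t) := by ring
  rw [this]
  unfold heatK' heatK
  ring

lemma heatK_zero {t : ℝ} (ht : 0 < t) : heatK t 0 = 1 / (2 * Real.sqrt (Real.pi * t)) := by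
  unfold heatK
  rw [show (4 : ℝ) * Real.pi * t = 2 ^ 2 * (Real.pi * t) by ring,
    Real.sqrt_mul (by norm_num), Real.sqrt_sq (by norm_num : (0:ℝ) ≤ 2)]
  norm_num

lemma memBc_bounded {F : ℝ → ℝ} (h : memBc F) : ∃ M : ℝ, 0 ≤ M ∧ ∀ y, |F y| ≤ M := by
  obtain ⟨hc, hbot, L, htop⟩ := h
  have h1 : ∀ᶠ y in atBot, |F y| < 1 := by
    have := hbot (Metric.ball_mem_nhds (0 : ℝ) one_pos)
    filter_upwards [this] with y hy
    simpa [Real.dist_eq] using hy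
  obtain ⟨a, ha⟩ := eventually_atBot.mp h1
  have h2 : ∀ᶠ y in atTop, |F y - L| < 1 := by
    have := htop (Metric.ball_mem_nhds L one_pos)
    filter_upwards [this] with y hy
    simpa [Real.dist_eq] using hy
  obtain ⟨b, hb⟩ := eventually_atTop.mp h2
  obtain ⟨C, hC⟩ := (isCompact_Icc (a := a) (b := b)).exists_bound_of_continuousOn hc.continuousOn
  refine ⟨max 1 (max (|L| + 1) C), le_trans zero_le_one (le_max_left _ _), fun y => ?_⟩
  rcases le_total y a with hya | hya
  · exact le_trans (ha y hya).le (le_max_left _ _)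
  rcases le_total y b with hyb | hyb
  · exact le_trans (by simpa [Real.norm_eq_abs] using hC y ⟨hya, hyb⟩)
      (le_trans (le_max_right _ _) (le_max_right _ _))
  · have := hb y hyb
    have h3 : |F y| ≤ |L| + 1 := by
      have := abs_sub_abs_le_abs_sub (F y) L
      linarith
    exact le_trans h3 (le_trans (le_max_left _ _) (le_max_right _ _))

lemma normBc_bddAbove {F : ℝ → ℝ} {M : ℝ} (hM : ∀ y, |F y| ≤ M) :
    BddAbove {r : ℝ | ∃ x y : ℝ, x < y ∧ r = |F x - F y|} := by
  refine ⟨2 * M, ?_⟩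
  rintro r ⟨x, y, _, rfl⟩
  have h1 := abs_le.mp (hM x)
  have h2 := abs_le.mp (hM y)
  exact abs_le.mpr ⟨by linarith, by linarith⟩

lemma le_normBc {F : ℝ → ℝ} (hbdd : BddAbove {r : ℝ | ∃ x y : ℝ, x < y ∧ r = |F x - F y|})
    {x y : ℝ} (hxy : x < y) : |F x - F y| ≤ normBc F :=
  le_csSup hbdd ⟨x, y, hxy, rfl⟩

lemma part1 (F : ℝ → ℝ) (hF : memBc F) (t : ℝ) (ht : 0 < t) (x : ℝ) :
    |heatConv F t x| ≤ normBc F / (2 * Real.sqrt (Real.pi * t)) := by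
  obtain ⟨M, hM0, hM⟩ := memBc_bounded hF
  have hbdd := normBc_bddAbove hM
  have hK' := heatK'_integrable ht
  have hcont1 : Continuous fun ξ : ℝ => F (x - ξ) := hF.1.comp (continuous_const.sub continuous_id)
  have hcont2 : Continuous fun ξ : ℝ => F (x + ξ) := hF.1.comp (continuous_const.add continuous_id)
  have hg : Integrable (fun ξ => F (x - ξ) * heatK' t ξ) :=
    hK'.bdd_mul hcont1.aestronglyMeasurable (c := M) (ae_of_all _ fun ξ => by rw [Real.norm_eq_abs]; exact hM _)
  have hg2 : Integrable (fun ξ => F (x + ξ) * heatK' t ξ) :=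
    hK'.bdd_mul hcont2.aestronglyMeasurable (c := M) (ae_of_all _ fun ξ => by rw [Real.norm_eq_abs]; exact hM _)
  have key := heatK_key ht (le_refl (0 : ℝ))
  have hsplit : heatConv F t x = ∫ ξ in Ioi 0, (F (x - ξ) - F (x + ξ)) * heatK' t ξ := by
    have e1 : heatConv F t x = (∫ ξ in Iic 0, F (x - ξ) * heatK' t ξ)
        + ∫ ξ in Ioi 0, F (x - ξ) * heatK' t ξ :=
      (intervalIntegral.integral_Iic_add_Ioi hg.integrableOn hg.integrableOn).symm
    have e2 : (∫ ξ in Iic 0, F (x - ξ) * heatK' t ξ)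
        = ∫ ξ in Ioi 0, F (x + ξ) * (-heatK' t ξ) := by
      have hh := integral_comp_neg_Ioi (0 : ℝ) (fun ξ => F (x - ξ) * heatK' t ξ)
      rw [neg_zero] at hh
      rw [← hh]
      refine setIntegral_congr_fun measurableSet_Ioi fun ξ _ => ?_
      rw [sub_neg_eq_add, heatK'_neg]
    have e4 : ∫ ξ in Ioi 0, (F (x - ξ) - F (x + ξ)) * heatK' t ξ
        = (∫ ξ in Ioi 0, F (x - ξ) * heatK' t ξ) - ∫ ξ in Ioi 0, F (x + ξ) * heatK' t ξ := by
      rw [← integral_sub hg.integrableOn hg2.integrableOn]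
      simp_rw [sub_mul]
    have e5 : ∫ ξ in Ioi 0, F (x + ξ) * (-heatK' t ξ)
        = -∫ ξ in Ioi 0, F (x + ξ) * heatK' t ξ := by
      simp_rw [mul_neg]
      exact integral_neg _
    rw [e1, e2, e5, e4]; ring
  rw [hsplit]
  have hsubint : IntegrableOn (fun ξ => (F (x - ξ) - F (x + ξ)) * heatK' t ξ) (Ioi 0) := by
    have h := hg.integrableOn.sub (hg2.integrableOn (s := Ioi 0))
    refine IntegrableOn.congr_fun h (fun ξ _ => ?_) measurableSet_Ioi
    simp only [Pi.sub_apply]; ring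
  calc |∫ ξ in Ioi 0, (F (x - ξ) - F (x + ξ)) * heatK' t ξ|
      ≤ ∫ ξ in Ioi 0, |F (x - ξ) - F (x + ξ)| * |heatK' t ξ| := by
        simpa [Real.norm_eq_abs] using
          norm_integral_le_integral_norm (fun ξ => (F (x - ξ) - F (x + ξ)) * heatK' t ξ)
            (μ := volume.restrict (Ioi 0))
    _ ≤ ∫ ξ in Ioi 0, normBc F * (ξ * heatK t ξ / (2 * t)) := by
        have habs : IntegrableOn (fun ξ => |F (x - ξ) - F (x + ξ)| * |heatK' t ξ|) (Ioi 0) :=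
          IntegrableOn.congr_fun hsubint.abs (fun ξ _ => abs_mul _ _) measurableSet_Ioi
        refine setIntegral_mono_on habs (key.1.const_mul _) measurableSet_Ioi fun ξ hξ => ?_
        have hξ0 : (0 : ℝ) < ξ := hξ
        have hKpos := heatK_pos ht ξ
        have h1 : |heatK' t ξ| = ξ * heatK t ξ / (2 * t) := by
          unfold heatK'
          rw [show -ξ * heatK t ξ / (2 * t) = -(ξ * heatK t ξ / (2 * t)) by ring, abs_neg,
            abs_of_nonneg (by positivity)]
        rw [h1]
        exact mul_le_mul_of_nonneg_right (le_normBc hbdd (by linarith : x - ξ < x + ξ))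
          (by positivity)
    _ = normBc F * heatK t 0 := by rw [integral_const_mul, key.2]
    _ = normBc F / (2 * Real.sqrt (Real.pi * t)) := by rw [heatK_zero ht, mul_one_div]

lemma part2 (t : ℝ) (ht : 0 < t) (c : ℝ) (hc : c < 1 / (2 * Real.sqrt (Real.pi * t))) :
    ∃ F : ℝ → ℝ, memBc F ∧ F ≠ 0 ∧ ∃ x : ℝ, c * normBc F < |heatConv F t x| := by
  have hcontK : Continuous (heatK t) :=
    continuous_const.mul (Real.continuous_exp.comp ((continuous_pow 2).neg.div_const (4 * t)))
  have h0 : c < heatK t 0 := by rw [heatK_zero ht]; exact hc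
  have hev : ∀ᶠ y in 𝓝 (0 : ℝ), c < heatK t y :=
    (hcontK.tendsto 0).eventually (eventually_gt_nhds h0)
  obtain ⟨ε, hcε, (hε : (0 : ℝ) < ε)⟩ :=
    ((hev.filter_mono (nhdsWithin_le_nhds (s := Ioi (0 : ℝ)))).and eventually_mem_nhdsWithin).exists
  set F : ℝ → ℝ := fun y => min 1 (max (y / ε) 0) with hFdef
  have hFc : Continuous F := continuous_const.min ((continuous_id.div_const ε).max continuous_const)
  have hF0 : ∀ y : ℝ, y ≤ 0 → F y = 0 := by
    intro y hy
    have : max (y / ε) 0 = 0 := max_eq_right (div_nonpos_iff.mpr (Or.inr ⟨hy, hε.le⟩))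
    rw [hFdef]
    simp only [this, min_eq_right zero_le_one]
  have hF1 : ∀ y : ℝ, ε ≤ y → F y = 1 := by
    intro y hy
    have h1 : (1 : ℝ) ≤ y / ε := (one_le_div hε).mpr hy
    have : max (y / ε) 0 = y / ε := max_eq_left (by linarith)
    rw [hFdef]
    simp only [this, min_eq_left h1]
  have hrange : ∀ y : ℝ, 0 ≤ F y ∧ F y ≤ 1 :=
    fun y => ⟨le_min zero_le_one (le_max_right _ _), min_le_left _ _⟩
  have hmem : memBc F := by
    refine ⟨hFc, ?_, 1, ?_⟩
    · refine Tendsto.congr' ?_ tendsto_const_nhds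
      exact eventually_atBot.mpr ⟨0, fun y hy => (hF0 y hy).symm⟩
    · refine Tendsto.congr' ?_ tendsto_const_nhds
      exact eventually_atTop.mpr ⟨ε, fun y hy => (hF1 y hy).symm⟩
  have hFne : F ≠ 0 := by
    intro h
    have := congrFun h ε
    rw [hF1 ε le_rfl] at this
    norm_num at this
  have hmemel : |F 0 - F ε| = 1 := by rw [hF0 0 le_rfl, hF1 ε le_rfl]; norm_num
  have hub : ∀ r ∈ {r : ℝ | ∃ x y : ℝ, x < y ∧ r = |F x - F y|}, r ≤ 1 := by
    rintro r ⟨a, b, _, rfl⟩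
    have ha := hrange a; have hb := hrange b
    exact abs_le.mpr ⟨by linarith [ha.1, ha.2, hb.1, hb.2], by linarith [ha.1, ha.2, hb.1, hb.2]⟩
  have hnorm : normBc F = 1 := by
    apply le_antisymm
    · exact csSup_le ⟨1, 0, ε, hε, hmemel.symm⟩ hub
    · exact le_csSup ⟨1, hub⟩ ⟨0, ε, hε, hmemel.symm⟩
  refine ⟨F, hmem, hFne, 0, ?_⟩
  rw [hnorm, mul_one]
  have hK' := heatK'_integrable ht
  have hmeas : Continuous fun ξ : ℝ => F (0 - ξ) := hFc.comp (continuous_const.sub continuous_id)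
  have hg : Integrable (fun ξ => F (0 - ξ) * heatK' t ξ) :=
    hK'.bdd_mul hmeas.aestronglyMeasurable
      (c := 1) (ae_of_all _ fun ξ => by rw [Real.norm_eq_abs, abs_of_nonneg (hrange _).1]; exact (hrange _).2)
  have hIoi : ∫ ξ in Ioi (0 : ℝ), F (0 - ξ) * heatK' t ξ = 0 := by
    rw [setIntegral_congr_fun measurableSet_Ioi
      (g := fun _ => (0 : ℝ)) (fun ξ hξ => by
        rw [hF0 (0 - ξ) (by simp only [zero_sub, neg_nonpos]; exact (le_of_lt hξ)), zero_mul])]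
    exact integral_zero _ _
  have hK'nonneg : ∀ ξ : ℝ, ξ ≤ 0 → 0 ≤ heatK' t ξ := by
    intro ξ hξ
    unfold heatK'
    exact div_nonneg (mul_nonneg (by linarith) (heatK_pos ht ξ).le) (by linarith)
  have hind : ∫ ξ in Iic (0 : ℝ), (Iic (-ε)).indicator (heatK' t) ξ = heatK t ε := by
    rw [setIntegral_indicator measurableSet_Iic,
      Set.inter_eq_right.mpr (Iic_subset_Iic.mpr (by linarith : -ε ≤ 0))]
    have hcomp := integral_comp_neg_Ioi ε (heatK' t)
    rw [← hcomp,
      setIntegral_congr_fun measurableSet_Ioi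
        (g := fun ξ => ξ * heatK t ξ / (2 * t))
        (fun ξ _ => by rw [heatK'_neg]; unfold heatK'; ring)]
    exact (heatK_key ht hε.le).2
  have hIic_ge : heatK t ε ≤ ∫ ξ in Iic (0 : ℝ), F (0 - ξ) * heatK' t ξ := by
    rw [← hind]
    refine setIntegral_mono_on ((hK'.indicator measurableSet_Iic).integrableOn)
      hg.integrableOn measurableSet_Iic fun ξ hξ => ?_
    by_cases h : ξ ≤ -ε
    · rw [Set.indicator_of_mem (show ξ ∈ Iic (-ε) from h) (heatK' t), hF1 (0 - ξ) (by linarith), one_mul]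
    · rw [Set.indicator_of_notMem (show ξ ∉ Iic (-ε) from h) (heatK' t)]
      exact mul_nonneg (hrange _).1 (hK'nonneg ξ hξ)
  have hconv : heatK t ε ≤ heatConv F t 0 := by
    unfold heatConv
    rw [← intervalIntegral.integral_Iic_add_Ioi hg.integrableOn hg.integrableOn, hIoi, add_zero]
    exact hIic_ge
  calc c < heatK t ε := hcε
    _ ≤ heatConv F t 0 := hconv
    _ ≤ |heatConv F t 0| := le_abs_self _


/-- `sup_x |u(x,t)| ≤ ‖F‖'_∞/(2√(πt))`, and the constant is sharp: for every `t > 0` and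
every `c < 1/(2√(πt))` there is a nonzero `F ∈ B_c` with `sup_x |u(x,t)| > c‖F‖'_∞`. -/
theorem stmt1 :
    (∀ F : ℝ → ℝ, memBc F → ∀ t : ℝ, 0 < t → ∀ x : ℝ,
      |heatConv F t x| ≤ normBc F / (2 * Real.sqrt (Real.pi * t))) ∧
    (∀ t : ℝ, 0 < t → ∀ c : ℝ, c < 1 / (2 * Real.sqrt (Real.pi * t)) →
      ∃ F : ℝ → ℝ, memBc F ∧ F ≠ 0 ∧ ∃ x : ℝ, c * normBc F < |heatConv F t x|) := by
  exact ⟨part1, part2⟩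
end

section
/- Let F ∈ B_c and suppose F is continuously differentiable on some open interval I ⊆ ℝ. Let u(x,t) = ∫_ℝ F(x−ξ) Θ_t'(ξ) dξ for t > 0. Then for every x₀ ∈ I, u(x,t) → F'(x₀) as (x,t) → (x₀, 0) with t > 0; consequently the function equal to u on ℝ×(0,∞) and to F' on I×{0} is continuous on (ℝ×(0,∞)) ∪ (I×{0}). -/
open MeasureTheory Filter Topology

namespace HeatAux
open Set


lemma heatK_pos {t : ℝ} (ht : 0 < t) (x : ℝ) : 0 < heatK t x := by
  unfold heatK
  have := Real.pi_pos
  positivity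

lemma heatK_eq (t x : ℝ) :
    heatK t x = (Real.sqrt (4 * Real.pi * t))⁻¹ * Real.exp (-(4 * t)⁻¹ * x ^ 2) := by
  unfold heatK; congr 1; ring_nf

lemma heatK'_eq {t : ℝ} (ht : 0 < t) (x : ℝ) :
    heatK' t x = (-(2 * t)⁻¹ * (Real.sqrt (4 * Real.pi * t))⁻¹) *
      (x * Real.exp (-(4 * t)⁻¹ * x ^ 2)) := by
  rw [heatK', heatK_eq]; ring

lemma integrable_heatK {t : ℝ} (ht : 0 < t) : Integrable (fun x => heatK t x) := by
  simp_rw [heatK_eq]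
  exact (integrable_exp_neg_mul_sq (by positivity)).const_mul _

lemma integrable_heatK' {t : ℝ} (ht : 0 < t) : Integrable (fun x => heatK' t x) := by
  simp_rw [heatK'_eq ht]
  exact (integrable_mul_exp_neg_mul_sq (by positivity)).const_mul _

lemma integrable_sq_gauss {b : ℝ} (hb : 0 < b) :
    Integrable (fun x : ℝ => x ^ 2 * Real.exp (-b * x ^ 2)) := by
  have h := integrable_rpow_mul_exp_neg_mul_sq hb (s := 2) (by norm_num)
  have e : ∀ x : ℝ, x ^ (2:ℝ) = x ^ (2:ℕ) := fun x => by
    rw [← Real.rpow_natCast x 2]; norm_num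
  simpa [e] using h

lemma integrable_mul_heatK' {t : ℝ} (ht : 0 < t) :
    Integrable (fun x => x * heatK' t x) := by
  have : (fun x => x * heatK' t x) = fun x =>
      (-(2 * t)⁻¹ * (Real.sqrt (4 * Real.pi * t))⁻¹) *
        (x ^ 2 * Real.exp (-(4 * t)⁻¹ * x ^ 2)) := by
    funext x; rw [heatK'_eq ht]; ring
  rw [this]
  exact (integrable_sq_gauss (by positivity)).const_mul _

lemma integral_heatK {t : ℝ} (ht : 0 < t) : ∫ x, heatK t x = 1 := by
  have h4 : (0:ℝ) < 4 * Real.pi * t := by have := Real.pi_pos; positivity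
  simp_rw [heatK_eq]
  rw [MeasureTheory.integral_const_mul, integral_gaussian]
  have : Real.pi / (4 * t)⁻¹ = 4 * Real.pi * t := by field_simp
  rw [this, inv_mul_cancel₀ (Real.sqrt_ne_zero'.2 h4)]


/-- exp(-b x²) → 0 at ±∞ -/
lemma tendsto_gauss_atTop {b : ℝ} (hb : 0 < b) :
    Tendsto (fun x : ℝ => Real.exp (-b * x ^ 2)) atTop (nhds 0) := by
  apply Real.tendsto_exp_atBot.comp
  have : Tendsto (fun x : ℝ => b * x ^ 2) atTop atTop :=
    (tendsto_pow_atTop (two_ne_zero)).const_mul_atTop hb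
  simpa [Function.comp_def, neg_mul] using tendsto_neg_atTop_atBot.comp this

lemma tendsto_heatK_atTop {t : ℝ} (ht : 0 < t) :
    Tendsto (fun x => heatK t x) atTop (nhds 0) := by
  simp_rw [heatK_eq]
  simpa using (tendsto_gauss_atTop (b := (4*t)⁻¹) (by positivity)).const_mul
    ((Real.sqrt (4 * Real.pi * t))⁻¹)

lemma heatK_even (t x : ℝ) : heatK t (-x) = heatK t x := by
  unfold heatK; ring_nf

lemma tendsto_heatK_atBot {t : ℝ} (ht : 0 < t) :
    Tendsto (fun x => heatK t x) atBot (nhds 0) := by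
  have h := (tendsto_heatK_atTop ht).comp tendsto_neg_atBot_atTop
  simpa [Function.comp_def, heatK_even] using h

/-- x * exp(-b x²) → 0 at atTop -/
lemma tendsto_mul_gauss_atTop {b : ℝ} (hb : 0 < b) :
    Tendsto (fun x : ℝ => x * Real.exp (-b * x ^ 2)) atTop (nhds 0) := by
  have h := rpow_mul_exp_neg_mul_sq_isLittleO_exp_neg hb (s := 1)
  have h2 : Tendsto (fun x : ℝ => Real.exp (-(1/2) * x)) atTop (nhds 0) := by
    apply Real.tendsto_exp_atBot.comp
    have : Tendsto (fun x : ℝ => (1/2 : ℝ) * x) atTop atTop :=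
      (tendsto_id (α := ℝ)).const_mul_atTop (by norm_num)
    exact (tendsto_neg_atTop_atBot.comp this).congr
      (fun x => by simp [Function.comp_def])
  have h3 := h.trans_tendsto h2
  apply h3.congr'
  filter_upwards [eventually_ge_atTop (0:ℝ)] with x hx
  rw [Real.rpow_one]

lemma tendsto_neg_mul_heatK_atTop {t : ℝ} (ht : 0 < t) :
    Tendsto (fun x => -x * heatK t x) atTop (nhds 0) := by
  simp_rw [heatK_eq]
  have := ((tendsto_mul_gauss_atTop (b := (4*t)⁻¹) (by positivity)).const_mul
    (-(Real.sqrt (4 * Real.pi * t))⁻¹))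
  simp only [mul_zero] at this
  apply this.congr
  intro x; ring

lemma tendsto_neg_mul_heatK_atBot {t : ℝ} (ht : 0 < t) :
    Tendsto (fun x => -x * heatK t x) atBot (nhds 0) := by
  have h := (tendsto_neg_mul_heatK_atTop ht).comp tendsto_neg_atBot_atTop
  have : Tendsto (fun x : ℝ => x * heatK t x) atBot (nhds 0) := by
    simpa [Function.comp_def, heatK_even] using h
  simpa using this.neg

lemma hasDerivAt_heatK {t : ℝ} (ht : 0 < t) (x : ℝ) :
    HasDerivAt (heatK t) (heatK' t x) x := by
  have h1 : HasDerivAt (fun x : ℝ => -x ^ 2 / (4 * t)) (-2 * x / (4 * t)) x := by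
    have := ((hasDerivAt_pow 2 x).neg).div_const (4 * t)
    simpa using this.congr_deriv (by ring)
  have h2 := (h1.exp).const_mul ((Real.sqrt (4 * Real.pi * t))⁻¹)
  have : heatK t = fun x => (Real.sqrt (4 * Real.pi * t))⁻¹ * Real.exp (-x ^ 2 / (4 * t)) := rfl
  rw [this]
  refine h2.congr_deriv ?_
  symm
  show heatK' t x = _
  rw [heatK']
  show -x * ((Real.sqrt (4 * Real.pi * t))⁻¹ * Real.exp (-x ^ 2 / (4 * t))) / (2*t) = _
  field_simp
  ring

lemma integral_heatK' {t : ℝ} (ht : 0 < t) : ∫ x, heatK' t x = 0 := by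
  have := integral_of_hasDerivAt_of_tendsto (f := heatK t) (f' := heatK' t)
    (fun x => hasDerivAt_heatK ht x) (integrable_heatK' ht)
    (tendsto_heatK_atBot ht) (tendsto_heatK_atTop ht)
  simpa using this

lemma hasDerivAt_neg_mul_heatK {t : ℝ} (ht : 0 < t) (x : ℝ) :
    HasDerivAt (fun x => -x * heatK t x) (-heatK t x - x * heatK' t x) x := by
  have h1 : HasDerivAt (fun x : ℝ => -x) (-1) x := by simpa using (hasDerivAt_neg' (x := x))
  have := h1.mul (hasDerivAt_heatK ht x)
  refine this.congr_deriv ?_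
  ring

lemma integral_mul_heatK' {t : ℝ} (ht : 0 < t) : ∫ x, x * heatK' t x = -1 := by
  have hint : Integrable (fun x => -heatK t x - x * heatK' t x) :=
    ((integrable_heatK ht).neg).sub (integrable_mul_heatK' ht)
  have h := integral_of_hasDerivAt_of_tendsto (f := fun x => -x * heatK t x)
    (f' := fun x => -heatK t x - x * heatK' t x)
    (fun x => hasDerivAt_neg_mul_heatK ht x) hint
    (tendsto_neg_mul_heatK_atBot ht) (tendsto_neg_mul_heatK_atTop ht)
  have h1 : Integrable (fun x => -heatK t x) := (integrable_heatK ht).neg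
  have h2 : ∫ x, (-heatK t x - x * heatK' t x) = 0 := by simpa using h
  rw [integral_sub h1 (integrable_mul_heatK' ht), integral_neg, integral_heatK ht] at h2
  linarith

lemma mul_heatK'_nonpos {t : ℝ} (ht : 0 < t) (x : ℝ) : x * heatK' t x ≤ 0 := by
  rw [heatK']
  have := (heatK_pos ht x).le
  have h2 : x * (-x * heatK t x / (2*t)) = -(x^2 * heatK t x / (2*t)) := by ring
  rw [h2]
  simp only [neg_nonpos]
  positivity

lemma integral_abs_mul_heatK' {t : ℝ} (ht : 0 < t) : ∫ x, |x * heatK' t x| = 1 := by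
  have : ∀ x, |x * heatK' t x| = -(x * heatK' t x) := fun x =>
    abs_of_nonpos (mul_heatK'_nonpos ht x)
  simp_rw [this]
  rw [integral_neg, integral_mul_heatK' ht]; norm_num

lemma continuous_heatK (t : ℝ) : Continuous (heatK t) := by
  unfold heatK
  exact continuous_const.mul (((continuous_pow 2).neg.div_const _).rexp)

lemma continuous_heatK' (t : ℝ) : Continuous (heatK' t) := by
  unfold heatK'
  exact ((continuous_id.neg.mul (continuous_heatK t))).div_const _

lemma bounded_of_memBc {F : ℝ → ℝ} (hF : memBc F) : ∃ C, 0 ≤ C ∧ ∀ x, |F x| ≤ C := by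
  obtain ⟨hc, hbot, L, htop⟩ := hF
  have h1 : ∀ᶠ x in atBot, |F x| < 1 := by
    have := hbot.eventually (Metric.ball_mem_nhds (0:ℝ) one_pos)
    simpa [Real.dist_eq] using this
  have h2 : ∀ᶠ x in atTop, |F x - L| < 1 := by
    have := htop.eventually (Metric.ball_mem_nhds L one_pos)
    simpa [Real.dist_eq] using this
  obtain ⟨a, ha⟩ := eventually_atBot.1 h1
  obtain ⟨b, hb⟩ := eventually_atTop.1 h2
  obtain ⟨C₀, hC₀⟩ := (isCompact_Icc (a := a) (b := b)).exists_bound_of_continuousOn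
    hc.continuousOn
  refine ⟨max (max 1 (|L| + 1)) (max C₀ 0), le_max_of_le_right (le_max_right _ _), fun x => ?_⟩
  rcases le_or_gt x a with hxa | hxa
  · exact le_trans (ha x hxa).le (le_max_of_le_left (le_max_left _ _))
  rcases le_or_gt b x with hbx | hbx
  · have := hb x hbx
    have : |F x| ≤ |L| + 1 := by
      have h := abs_sub_abs_le_abs_sub (F x) L
      linarith
    exact le_trans this (le_max_of_le_left (le_max_right _ _))
  · have hx : x ∈ Icc a b := ⟨hxa.le, hbx.le⟩
    have := hC₀ x hx
    rw [Real.norm_eq_abs] at this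
    exact le_trans this (le_max_of_le_right (le_max_left _ _))

lemma abs_heatK'_eq {t : ℝ} (ht : 0 < t) (x : ℝ) :
    |heatK' t x| = |x| * heatK t x / (2 * t) := by
  rw [heatK', abs_div, abs_mul, abs_neg, abs_of_pos (heatK_pos ht x),
    abs_of_pos (by positivity : (0:ℝ) < 2 * t)]

lemma abs_mul_heatK'_eq {t : ℝ} (ht : 0 < t) (x : ℝ) :
    |x * heatK' t x| = x ^ 2 * heatK t x / (2 * t) := by
  rw [abs_mul, abs_heatK'_eq ht, ← sq_abs x]
  ring

lemma heatK_tail_le {t r : ℝ} (ht : 0 < t) (hr : 0 < r) {x : ℝ} (hx : r ≤ |x|) :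
    heatK t x ≤ Real.sqrt 2 * Real.exp (-r ^ 2 / (8 * t)) * heatK (2 * t) x := by
  have hpi := Real.pi_pos
  unfold heatK
  have h2 : 4 * Real.pi * (2 * t) = 2 * (4 * Real.pi * t) := by ring
  rw [h2, Real.sqrt_mul (by norm_num : (0:ℝ) ≤ 2), mul_inv]
  have hs2 : Real.sqrt 2 * ((Real.sqrt 2)⁻¹ * (Real.sqrt (4 * Real.pi * t))⁻¹) =
      (Real.sqrt (4 * Real.pi * t))⁻¹ := by
    rw [← mul_assoc, mul_inv_cancel₀ (by positivity : Real.sqrt 2 ≠ 0), one_mul]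
  have hx2 : r ^ 2 ≤ x ^ 2 := by
    have := sq_abs x
    nlinarith [abs_nonneg x]
  calc (Real.sqrt (4 * Real.pi * t))⁻¹ * Real.exp (-x ^ 2 / (4 * t))
      ≤ (Real.sqrt (4 * Real.pi * t))⁻¹ *
        (Real.exp (-r ^ 2 / (8 * t)) * Real.exp (-x ^ 2 / (4 * (2 * t)))) := by
        rw [← Real.exp_add]
        apply mul_le_mul_of_nonneg_left _ (by positivity)
        apply Real.exp_le_exp.2
        rw [div_add_div _ _ (by positivity : (8:ℝ) * t ≠ 0) (by positivity : (4:ℝ) * (2*t) ≠ 0),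
          div_le_div_iff₀ (by positivity) (by positivity)]
        have key : r ^ 2 * (t * t) ≤ x ^ 2 * (t * t) :=
          mul_le_mul_of_nonneg_right hx2 (by positivity)
        nlinarith [key]
      _ = Real.sqrt 2 * Real.exp (-r ^ 2 / (8 * t)) *
          ((Real.sqrt 2)⁻¹ * (Real.sqrt (4 * Real.pi * t))⁻¹ * Real.exp (-x ^ 2 / (4 * (2*t)))) := by
        rw [show Real.sqrt 2 * Real.exp (-r ^ 2 / (8 * t)) *
            ((Real.sqrt 2)⁻¹ * (Real.sqrt (4 * Real.pi * t))⁻¹ * Real.exp (-x ^ 2 / (4 * (2*t)))) =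
            (Real.sqrt 2 * ((Real.sqrt 2)⁻¹ * (Real.sqrt (4 * Real.pi * t))⁻¹)) *
              (Real.exp (-r ^ 2 / (8 * t)) * Real.exp (-x ^ 2 / (4 * (2*t)))) from by ring, hs2]
      _ = _ := by ring

lemma tail_bound {t r A B : ℝ} (ht : 0 < t) (hr : 0 < r) (hA : 0 ≤ A) (hB : 0 ≤ B)
    {ξ : ℝ} (hξ : r ≤ |ξ|) :
    (A + B * |ξ|) * |heatK' t ξ| ≤
      (A / r + B) * (2 * Real.sqrt 2) * Real.exp (-r ^ 2 / (8 * t)) * |ξ * heatK' (2 * t) ξ| := by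
  have h2t : (0:ℝ) < 2 * t := by positivity
  rw [abs_heatK'_eq ht, abs_mul_heatK'_eq (by positivity : 0 < 2*t)]
  have hAB : A + B * |ξ| ≤ (A / r + B) * |ξ| := by
    have : A ≤ A / r * |ξ| := by
      rw [div_mul_eq_mul_div, le_div_iff₀ hr]
      exact mul_le_mul_of_nonneg_left hξ hA
    nlinarith
  have hK := heatK_tail_le ht hr hξ
  calc (A + B * |ξ|) * (|ξ| * heatK t ξ / (2 * t))
      ≤ ((A / r + B) * |ξ|) * (|ξ| * (Real.sqrt 2 * Real.exp (-r ^ 2 / (8 * t)) *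
          heatK (2 * t) ξ) / (2 * t)) := by
        refine mul_le_mul hAB ?_
          (div_nonneg (mul_nonneg (abs_nonneg _) (heatK_pos ht ξ).le) h2t.le)
          (mul_nonneg (by positivity) (abs_nonneg _))
        gcongr
      _ = (A / r + B) * (2 * Real.sqrt 2) * Real.exp (-r ^ 2 / (8 * t)) *
          (ξ ^ 2 * heatK (2 * t) ξ / (2 * (2 * t))) := by
        rw [← sq_abs ξ]; ring


lemma integrable_F_heatK' {F : ℝ → ℝ} (hFc : Continuous F) {C : ℝ} (hC : ∀ y, |F y| ≤ C)
    {t : ℝ} (ht : 0 < t) (x : ℝ) :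
    Integrable (fun ξ => F (x - ξ) * heatK' t ξ) := by
  apply Integrable.mono' ((integrable_heatK' ht).abs.const_mul C)
  · exact ((hFc.comp (continuous_const.sub continuous_id)).mul (continuous_heatK' t)).aestronglyMeasurable
  · refine Eventually.of_forall fun ξ => ?_
    rw [Real.norm_eq_abs, abs_mul]
    exact mul_le_mul_of_nonneg_right (hC _) (abs_nonneg _)

lemma integrable_g_heatK' {F : ℝ → ℝ} (hFc : Continuous F) {C : ℝ} (hC : ∀ y, |F y| ≤ C)
    (D : ℝ) {t : ℝ} (ht : 0 < t) (x : ℝ) :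
    Integrable (fun ξ => (F (x - ξ) - F x + ξ * D) * heatK' t ξ) := by
  have h : (fun ξ => (F (x - ξ) - F x + ξ * D) * heatK' t ξ) =
      fun ξ => F (x - ξ) * heatK' t ξ - F x * heatK' t ξ + D * (ξ * heatK' t ξ) := by
    funext ξ; ring
  rw [h]
  exact ((integrable_F_heatK' hFc hC ht x).sub ((integrable_heatK' ht).const_mul (F x))).add
    ((integrable_mul_heatK' ht).const_mul D)

lemma heatConv_sub_eq {F : ℝ → ℝ} (hFc : Continuous F) {C : ℝ} (hC : ∀ y, |F y| ≤ C)
    (D : ℝ) {t : ℝ} (ht : 0 < t) (x : ℝ) :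
    heatConv F t x - D = ∫ ξ, (F (x - ξ) - F x + ξ * D) * heatK' t ξ := by
  have h : (fun ξ => (F (x - ξ) - F x + ξ * D) * heatK' t ξ) =
      fun ξ => F (x - ξ) * heatK' t ξ - F x * heatK' t ξ + D * (ξ * heatK' t ξ) := by
    funext ξ; ring
  have ia : Integrable (fun ξ => F (x - ξ) * heatK' t ξ - F x * heatK' t ξ) :=
    (integrable_F_heatK' hFc hC ht x).sub ((integrable_heatK' ht).const_mul (F x))
  rw [h, integral_add ia ((integrable_mul_heatK' ht).const_mul D),
    integral_sub (integrable_F_heatK' hFc hC ht x) ((integrable_heatK' ht).const_mul (F x)),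
    MeasureTheory.integral_const_mul, MeasureTheory.integral_const_mul,
    integral_heatK' ht, integral_mul_heatK' ht]
  rw [heatConv]
  ring

/-- The key quantitative estimate. -/
lemma key_est {F : ℝ → ℝ} (hFc : Continuous F) {C : ℝ} (hC0 : 0 ≤ C) (hC : ∀ y, |F y| ≤ C)
    (D : ℝ) {r ε' : ℝ} (hr : 0 < r) (hε' : 0 ≤ ε') (x : ℝ)
    (hMVT : ∀ ξ : ℝ, |ξ| < r → |F (x - ξ) - F x + ξ * D| ≤ ε' * |ξ|)
    {t : ℝ} (ht : 0 < t) :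
    |heatConv F t x - D| ≤ ε' +
      ((2 * C / r + |D|) * (2 * Real.sqrt 2)) * Real.exp (-r ^ 2 / (8 * t)) := by
  set g : ℝ → ℝ := fun ξ => F (x - ξ) - F x + ξ * D with hg
  have hgi : Integrable (fun ξ => g ξ * heatK' t ξ) := integrable_g_heatK' hFc hC D ht x
  rw [heatConv_sub_eq hFc hC D ht x]
  have h1 : |∫ ξ, g ξ * heatK' t ξ| ≤ ∫ ξ, |g ξ * heatK' t ξ| := by
    have := norm_integral_le_integral_norm (μ := volume) (fun ξ => g ξ * heatK' t ξ)
    simp only [Real.norm_eq_abs] at this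
    exact this
  refine h1.trans ?_
  have hsplit : (∫ ξ in Metric.ball (0:ℝ) r, |g ξ * heatK' t ξ|) +
      ∫ ξ in (Metric.ball (0:ℝ) r)ᶜ, |g ξ * heatK' t ξ| = ∫ ξ, |g ξ * heatK' t ξ| :=
    integral_add_compl Metric.isOpen_ball.measurableSet hgi.abs
  rw [← hsplit]
  have hb1 : (∫ ξ in Metric.ball (0:ℝ) r, |g ξ * heatK' t ξ|) ≤ ε' := by
    have step1 : (∫ ξ in Metric.ball (0:ℝ) r, |g ξ * heatK' t ξ|) ≤
        ∫ ξ in Metric.ball (0:ℝ) r, ε' * |ξ * heatK' t ξ| := by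
      refine setIntegral_mono_on hgi.abs.integrableOn
        (((integrable_mul_heatK' ht).abs.const_mul ε').integrableOn)
        Metric.isOpen_ball.measurableSet fun ξ hξ => ?_
      rw [mem_ball_zero_iff, Real.norm_eq_abs] at hξ
      rw [abs_mul, abs_mul]
      calc |g ξ| * |heatK' t ξ| ≤ ε' * |ξ| * |heatK' t ξ| :=
            mul_le_mul_of_nonneg_right (hMVT ξ hξ) (abs_nonneg _)
        _ = ε' * (|ξ| * |heatK' t ξ|) := by ring
    refine step1.trans ?_
    have step2 : (∫ ξ in Metric.ball (0:ℝ) r, ε' * |ξ * heatK' t ξ|) ≤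
        ∫ ξ, ε' * |ξ * heatK' t ξ| :=
      setIntegral_le_integral ((integrable_mul_heatK' ht).abs.const_mul ε')
        (Eventually.of_forall fun ξ => by positivity)
    refine step2.trans ?_
    rw [MeasureTheory.integral_const_mul, integral_abs_mul_heatK' ht, mul_one]
  have hb2 : (∫ ξ in (Metric.ball (0:ℝ) r)ᶜ, |g ξ * heatK' t ξ|) ≤
      ((2 * C / r + |D|) * (2 * Real.sqrt 2)) * Real.exp (-r ^ 2 / (8 * t)) := by
    set K : ℝ := (2 * C / r + |D|) * (2 * Real.sqrt 2) * Real.exp (-r ^ 2 / (8 * t)) with hK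
    have hKi : Integrable (fun ξ => K * |ξ * heatK' (2 * t) ξ|) :=
      (integrable_mul_heatK' (by positivity)).abs.const_mul K
    have step1 : (∫ ξ in (Metric.ball (0:ℝ) r)ᶜ, |g ξ * heatK' t ξ|) ≤
        ∫ ξ in (Metric.ball (0:ℝ) r)ᶜ, K * |ξ * heatK' (2 * t) ξ| := by
      refine setIntegral_mono_on hgi.abs.integrableOn hKi.integrableOn
        Metric.isOpen_ball.measurableSet.compl fun ξ hξ => ?_
      rw [mem_compl_iff, mem_ball_zero_iff, Real.norm_eq_abs, not_lt] at hξ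
      have hgb : |g ξ| ≤ 2 * C + |D| * |ξ| := by
        have h1 : |g ξ| ≤ |F (x - ξ) - F x| + |ξ * D| := abs_add_le _ _
        have h2 : |F (x - ξ) - F x| ≤ |F (x - ξ)| + |F x| := abs_sub _ _
        have h3 := hC (x - ξ); have h4 := hC x
        rw [abs_mul] at h1
        nlinarith [abs_nonneg ξ, abs_nonneg D]
      calc |g ξ * heatK' t ξ| = |g ξ| * |heatK' t ξ| := abs_mul _ _
        _ ≤ (2 * C + |D| * |ξ|) * |heatK' t ξ| :=
            mul_le_mul_of_nonneg_right hgb (abs_nonneg _)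
        _ ≤ K * |ξ * heatK' (2 * t) ξ| := by
            rw [hK]
            exact tail_bound ht hr (by positivity) (abs_nonneg D) hξ
    refine step1.trans ?_
    have step2 : (∫ ξ in (Metric.ball (0:ℝ) r)ᶜ, K * |ξ * heatK' (2 * t) ξ|) ≤
        ∫ ξ, K * |ξ * heatK' (2 * t) ξ| :=
      setIntegral_le_integral hKi (Eventually.of_forall fun ξ => by positivity)
    refine step2.trans ?_
    rw [MeasureTheory.integral_const_mul, integral_abs_mul_heatK' (by positivity : (0:ℝ) < 2*t),
      mul_one, hK]
  linarith

lemma tendsto_tail (K r : ℝ) (hr : 0 < r) :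
    Tendsto (fun t : ℝ => K * Real.exp (-r ^ 2 / (8 * t))) (nhdsWithin 0 (Ioi 0)) (nhds 0) := by
  have h8 : Tendsto (fun t : ℝ => 8 * t) (nhdsWithin 0 (Ioi 0)) (nhdsWithin 0 (Ioi 0)) := by
    have : Tendsto (fun t : ℝ => 8 * t) (nhdsWithin 0 (Ioi 0)) (nhds 0) := by
      have hc : Continuous (fun t : ℝ => 8 * t) := continuous_const.mul continuous_id
      have := hc.tendsto (0:ℝ)
      simpa using this.mono_left nhdsWithin_le_nhds
    refine tendsto_nhdsWithin_of_tendsto_nhds_of_eventually_within _ this ?_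
    filter_upwards [self_mem_nhdsWithin] with t ht
    exact mul_pos (by norm_num : (0:ℝ) < 8) ht
  have hinv : Tendsto (fun t : ℝ => (8 * t)⁻¹) (nhdsWithin 0 (Ioi 0)) atTop :=
    tendsto_inv_nhdsGT_zero.comp h8
  have h1 : Tendsto (fun t : ℝ => -r ^ 2 / (8 * t)) (nhdsWithin 0 (Ioi 0)) atBot := by
    have h2 : Tendsto (fun t : ℝ => r ^ 2 * (8 * t)⁻¹) (nhdsWithin 0 (Ioi 0)) atTop :=
      hinv.const_mul_atTop (by positivity)
    have h3 := tendsto_neg_atTop_atBot.comp h2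
    apply h3.congr
    intro t
    simp only [Function.comp_apply]
    rw [div_eq_mul_inv]
    ring
  have := (Real.tendsto_exp_atBot.comp h1).const_mul K
  simpa using this

lemma heatK_le_of_between {t t₀ : ℝ} (ht₀ : 0 < t₀) (h1 : t₀ / 2 < t) (h2 : t < 2 * t₀) (ξ : ℝ) :
    heatK t ξ ≤ (Real.sqrt (2 * Real.pi * t₀))⁻¹ * Real.exp (-(8 * t₀)⁻¹ * ξ ^ 2) := by
  have hpi := Real.pi_pos
  have ht : 0 < t := by linarith
  unfold heatK
  have e1 : (Real.sqrt (4 * Real.pi * t))⁻¹ ≤ (Real.sqrt (2 * Real.pi * t₀))⁻¹ := by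
    apply inv_anti₀ (Real.sqrt_pos.2 (by positivity))
    apply Real.sqrt_le_sqrt
    nlinarith
  have e2 : Real.exp (-ξ ^ 2 / (4 * t)) ≤ Real.exp (-(8 * t₀)⁻¹ * ξ ^ 2) := by
    apply Real.exp_le_exp.2
    rw [neg_div, neg_mul, neg_le_neg_iff, inv_mul_eq_div]
    apply div_le_div_of_nonneg_left (by positivity) (by positivity)
    linarith
  exact mul_le_mul e1 e2 (by positivity) (by positivity)

lemma continuousAt_heatConv {F : ℝ → ℝ} (hFc : Continuous F) {C : ℝ} (hC : ∀ y, |F y| ≤ C)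
    {p₀ : ℝ × ℝ} (ht₀ : 0 < p₀.2) :
    ContinuousAt (fun p : ℝ × ℝ => heatConv F p.2 p.1) p₀ := by
  set t₀ := p₀.2 with ht₀def
  have hC0 : 0 ≤ C := le_trans (abs_nonneg _) (hC 0)
  set B0 : ℝ := C * ((Real.sqrt (2 * Real.pi * t₀))⁻¹ * t₀⁻¹) with hB0
  have key : ContinuousAt (fun p : ℝ × ℝ => ∫ ξ : ℝ, F (p.1 - ξ) * heatK' p.2 ξ) p₀ := by
    apply continuousAt_of_dominated
      (bound := fun ξ => B0 * (|ξ| * Real.exp (-(8 * t₀)⁻¹ * ξ ^ 2)))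
    · exact Eventually.of_forall fun p =>
        ((hFc.comp (continuous_const.sub continuous_id)).mul
          (continuous_heatK' p.2)).aestronglyMeasurable
    · have hmem : {p : ℝ × ℝ | p.2 ∈ Ioo (t₀ / 2) (2 * t₀)} ∈ nhds p₀ := by
        apply (isOpen_Ioo.preimage continuous_snd).mem_nhds
        exact ⟨by linarith, by linarith⟩
      filter_upwards [hmem] with p hp
      refine Eventually.of_forall fun ξ => ?_
      obtain ⟨h1, h2⟩ := hp
      have htp : 0 < p.2 := lt_trans (by linarith) h1
      rw [Real.norm_eq_abs, abs_mul, abs_heatK'_eq htp]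
      have hKb := heatK_le_of_between ht₀ h1 h2 ξ
      calc |F (p.1 - ξ)| * (|ξ| * heatK p.2 ξ / (2 * p.2))
          ≤ C * (|ξ| * ((Real.sqrt (2 * Real.pi * t₀))⁻¹ *
              Real.exp (-(8 * t₀)⁻¹ * ξ ^ 2)) / t₀) := by
            refine mul_le_mul (hC _) ?_ ?_ hC0
            · exact div_le_div₀ (by positivity)
                (mul_le_mul_of_nonneg_left hKb (abs_nonneg ξ)) (by linarith) (by linarith)
            · exact div_nonneg (mul_nonneg (abs_nonneg _) (heatK_pos htp ξ).le)
                (by linarith)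
        _ = B0 * (|ξ| * Real.exp (-(8 * t₀)⁻¹ * ξ ^ 2)) := by
            rw [hB0]
            field_simp
    · have hb : (0:ℝ) < (8 * t₀)⁻¹ := by positivity
      have h := (integrable_mul_exp_neg_mul_sq hb).abs
      have h2 : Integrable (fun ξ : ℝ => |ξ| * Real.exp (-(8 * t₀)⁻¹ * ξ ^ 2)) := by
        apply h.congr
        refine Eventually.of_forall fun ξ => ?_
        simp [abs_mul, abs_of_pos (Real.exp_pos _)]
      exact h2.const_mul B0
    · refine Eventually.of_forall fun ξ => ?_
      have hc1 : ContinuousAt (fun p : ℝ × ℝ => F (p.1 - ξ)) p₀ :=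
        (hFc.comp (continuous_fst.sub continuous_const)).continuousAt
      have hc2 : ContinuousAt (fun p : ℝ × ℝ => heatK' p.2 ξ) p₀ := by
        have e : (fun p : ℝ × ℝ => heatK' p.2 ξ) = fun p : ℝ × ℝ =>
            -ξ * ((Real.sqrt (4 * Real.pi * p.2))⁻¹ * Real.exp (-ξ ^ 2 / (4 * p.2))) /
              (2 * p.2) := rfl
        rw [e]
        have hs : ContinuousAt (fun p : ℝ × ℝ => (Real.sqrt (4 * Real.pi * p.2))⁻¹) p₀ := by
          apply ContinuousAt.inv₀
          · exact (Real.continuous_sqrt.comp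
              (continuous_const.mul continuous_snd)).continuousAt
          · have := Real.pi_pos
            exact ne_of_gt (Real.sqrt_pos.2 (by positivity))
        have he : ContinuousAt (fun p : ℝ × ℝ => Real.exp (-ξ ^ 2 / (4 * p.2))) p₀ := by
          apply Real.continuous_exp.continuousAt.comp
          apply ContinuousAt.div continuousAt_const
            (continuous_const.mul continuous_snd).continuousAt
          exact mul_ne_zero (by norm_num) (ne_of_gt ht₀)
        exact ((continuousAt_const.mul (hs.mul he))).div
          ((continuous_const.mul continuous_snd).continuousAt) (by positivity)
      exact hc1.mul hc2
  exact key

end HeatAux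
open HeatAux Set

/-- If `F ∈ B_c` is continuously differentiable on an open interval `I`, then for every
`x₀ ∈ I`, `u(x,t) → F'(x₀)` as `(x,t) → (x₀,0)` with `t > 0`; consequently the function
equal to `u` on `ℝ×(0,∞)` and to `F'` on `I×{0}` is continuous on their union. -/
theorem stmt7 (F : ℝ → ℝ) (hF : memBc F) (I : Set ℝ) (hIopen : IsOpen I)
    (hIconn : I.OrdConnected)
    (hF1 : ∃ F' : ℝ → ℝ, (∀ x ∈ I, HasDerivAt F (F' x) x) ∧ ContinuousOn F' I) :
    (∀ x₀ ∈ I,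
      Tendsto (fun p : ℝ × ℝ => heatConv F p.2 p.1)
        (nhdsWithin (x₀, 0) {p : ℝ × ℝ | 0 < p.2}) (nhds (deriv F x₀))) ∧
    ContinuousOn (fun p : ℝ × ℝ => if 0 < p.2 then heatConv F p.2 p.1 else deriv F p.1)
      ({p : ℝ × ℝ | 0 < p.2} ∪ I ×ˢ {0}) := by
  obtain ⟨F', hd, hF'c⟩ := hF1
  obtain ⟨C, hC0, hC⟩ := bounded_of_memBc hF
  have hFc := hF.1
  -- Main tendsto statement
  have main : ∀ x₀ ∈ I, Tendsto (fun p : ℝ × ℝ => heatConv F p.2 p.1)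
      (nhdsWithin (x₀, 0) {p : ℝ × ℝ | 0 < p.2}) (nhds (F' x₀)) := by
    intro x₀ hx₀
    rw [Metric.tendsto_nhds]
    intro ε hε
    have hFx₀cont : ContinuousAt F' x₀ := hF'c.continuousAt (hIopen.mem_nhds hx₀)
    obtain ⟨δ, hδ, hδprop⟩ := Metric.continuousAt_iff.1 hFx₀cont (ε/4) (by positivity)
    obtain ⟨δI, hδI, hballI⟩ := Metric.mem_nhds_iff.1 (hIopen.mem_nhds hx₀)
    set ρ := min δ δI with hρdef
    have hρ : 0 < ρ := lt_min hδ hδI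
    set r := ρ / 2 with hrdef
    have hr : 0 < r := by positivity
    have hρr : ρ = 2 * r := by rw [hrdef]; ring
    have hgood : ∀ y : ℝ, |y - x₀| < ρ → |F' y - F' x₀| ≤ ε/4 ∧ y ∈ I := by
      intro y hy
      constructor
      · have h1 : dist y x₀ < δ := by
          rw [Real.dist_eq]; exact lt_of_lt_of_le hy (min_le_left _ _)
        have := hδprop h1
        rw [Real.dist_eq] at this
        exact this.le
      · apply hballI
        rw [Metric.mem_ball, Real.dist_eq]
        exact lt_of_lt_of_le hy (min_le_right _ _)
    -- MVT estimate
    have hMVT : ∀ x : ℝ, |x - x₀| < r → ∀ ξ : ℝ, |ξ| < r →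
        |F (x - ξ) - F x + ξ * F' x₀| ≤ (ε/2) * |ξ| := by
      intro x hx ξ hξr
      rcases eq_or_ne ξ 0 with rfl | hξ0
      · simp
      have e1 : |x - x₀| < r := hx
      have e2 : |x - ξ - x₀| < 2 * r := by
        have h1 : x - ξ - x₀ = (x - x₀) + (-ξ) := by ring
        rw [h1]
        calc |(x - x₀) + (-ξ)| ≤ |x - x₀| + |(-ξ)| := abs_add_le _ _
          _ = |x - x₀| + |ξ| := by rw [abs_neg]
          _ < 2 * r := by linarith
      rw [abs_lt] at e1 e2
      have hminlb : x₀ - ρ < min (x - ξ) x := lt_min (by linarith) (by linarith)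
      have hmaxub : max (x - ξ) x < x₀ + ρ := max_lt (by linarith) (by linarith)
      have hIcc : Icc (min (x - ξ) x) (max (x - ξ) x) ⊆ {y : ℝ | |y - x₀| < ρ} := by
        intro y hy
        obtain ⟨hy1, hy2⟩ := hy
        rw [mem_setOf_eq, abs_lt]
        constructor <;> linarith
      have hab : min (x - ξ) x < max (x - ξ) x :=
        min_lt_max.mpr (fun h => hξ0 (by linarith))
      obtain ⟨c, hc, hcs⟩ := exists_hasDerivAt_eq_slope F F' hab
        (hFc.continuousOn)
        (fun y hy => hd y (hgood y (hIcc (Ioo_subset_Icc_self hy)) |>.2))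
      have hcball := hgood c (hIcc (Ioo_subset_Icc_self hc))
      have hcF' : |F' c - F' x₀| ≤ ε/4 := hcball.1
      have hceq : F (x - ξ) - F x = -ξ * F' c := by
        rcases lt_or_gt_of_ne hξ0 with hneg | hpos
        · have h1 : min (x - ξ) x = x := min_eq_right (by linarith)
          have h2 : max (x - ξ) x = x - ξ := max_eq_left (by linarith)
          rw [h1, h2] at hcs
          have hne : x - ξ - x ≠ 0 := by intro h; exact hξ0 (by linarith)
          rw [eq_div_iff hne] at hcs
          linear_combination -hcs
        · have h1 : min (x - ξ) x = x - ξ := min_eq_left (by linarith)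
          have h2 : max (x - ξ) x = x := max_eq_right (by linarith)
          rw [h1, h2] at hcs
          have hne : x - (x - ξ) ≠ 0 := by intro h; exact hξ0 (by linarith)
          rw [eq_div_iff hne] at hcs
          linear_combination hcs
      have habs : |F' x₀ - F' c| ≤ ε/2 := by
        rw [abs_sub_comm]; linarith
      calc |F (x - ξ) - F x + ξ * F' x₀| = |ξ * (F' x₀ - F' c)| := by
            rw [hceq]; congr 1; ring
        _ = |ξ| * |F' x₀ - F' c| := abs_mul _ _
        _ ≤ |ξ| * (ε/2) := mul_le_mul_of_nonneg_left habs (abs_nonneg ξ)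
        _ = (ε/2) * |ξ| := mul_comm _ _
    -- tail
    set K : ℝ := (2 * C / r + |F' x₀|) * (2 * Real.sqrt 2) with hK
    have hev2 : ∀ᶠ t in nhdsWithin (0:ℝ) (Ioi 0),
        K * Real.exp (-r ^ 2 / (8 * t)) < ε/2 :=
      (tendsto_tail K r hr).eventually_lt_const (by positivity)
    have hsnd : Tendsto (fun p : ℝ × ℝ => p.2)
        (nhdsWithin (x₀, 0) {p : ℝ × ℝ | 0 < p.2}) (nhdsWithin (0:ℝ) (Ioi 0)) :=
      continuous_snd.continuousWithinAt.tendsto_nhdsWithin (fun p hp => hp)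
    have hfst : Tendsto (fun p : ℝ × ℝ => p.1)
        (nhdsWithin (x₀, 0) {p : ℝ × ℝ | 0 < p.2}) (nhds x₀) :=
      continuous_fst.continuousAt.continuousWithinAt
    have hev3 : ∀ᶠ y in nhds x₀, |y - x₀| < r := by
      have := Metric.ball_mem_nhds x₀ hr
      filter_upwards [this] with y hy
      rw [Metric.mem_ball, Real.dist_eq] at hy
      exact hy
    filter_upwards [hsnd.eventually hev2, hfst.eventually hev3, self_mem_nhdsWithin]
      with p h2 h1 h0
    rw [Real.dist_eq]
    have est := key_est hFc hC0 hC (F' x₀) hr (le_of_lt (by positivity : (0:ℝ) < ε/2))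
      p.1 (hMVT p.1 h1) h0
    rw [← hK] at est
    linarith
  constructor
  · intro x₀ hx₀
    rw [(hd x₀ hx₀).deriv]
    exact main x₀ hx₀
  · intro p hp
    rcases hp with hp | hp
    · have hCA : ContinuousAt (fun q : ℝ × ℝ => heatConv F q.2 q.1) p :=
        continuousAt_heatConv hFc hC hp
      have heq : (fun q : ℝ × ℝ => heatConv F q.2 q.1) =ᶠ[nhds p]
          (fun q : ℝ × ℝ => if 0 < q.2 then heatConv F q.2 q.1 else deriv F q.1) := by
        filter_upwards [(isOpen_lt continuous_const continuous_snd).mem_nhds hp] with q hq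
        exact (if_pos hq).symm
      exact (hCA.congr heq).continuousWithinAt
    · obtain ⟨x₀, τ⟩ := p
      obtain ⟨hp1, hp2⟩ := hp
      have hτ : τ = 0 := hp2
      subst hτ
      have hfp : (if 0 < ((x₀, (0:ℝ)) : ℝ × ℝ).2 then heatConv F ((x₀, (0:ℝ)) : ℝ × ℝ).2
          ((x₀, (0:ℝ)) : ℝ × ℝ).1 else deriv F ((x₀, (0:ℝ)) : ℝ × ℝ).1) = deriv F x₀ :=
        if_neg (lt_irrefl 0)
      unfold ContinuousWithinAt
      have hfp2 : (fun p : ℝ × ℝ => if 0 < p.2 then heatConv F p.2 p.1 else deriv F p.1)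
          ((x₀, (0:ℝ)) : ℝ × ℝ) = deriv F x₀ := hfp
      rw [hfp2, nhdsWithin_union, tendsto_sup]
      constructor
      · have hmm := main x₀ hp1
        rw [← (hd x₀ hp1).deriv] at hmm
        refine Tendsto.congr' ?_ hmm
        filter_upwards [self_mem_nhdsWithin] with q hq
        exact (if_pos hq).symm
      · have hf : Tendsto (fun q : ℝ × ℝ => q.1)
            (nhdsWithin (x₀, 0) (I ×ˢ {(0:ℝ)})) (nhdsWithin x₀ I) :=
          continuous_fst.continuousWithinAt.tendsto_nhdsWithin (fun q hq => hq.1)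
        have h2 : Tendsto (fun q : ℝ × ℝ => F' q.1)
            (nhdsWithin (x₀, 0) (I ×ˢ {(0:ℝ)})) (nhds (F' x₀)) :=
          (hF'c x₀ hp1).tendsto.comp hf
        rw [(hd x₀ hp1).deriv]
        apply Tendsto.congr' ?_ h2
        filter_upwards [self_mem_nhdsWithin] with q hq
        obtain ⟨hq1, hq2⟩ := hq
        have hq2' : q.2 = 0 := hq2
        rw [if_neg (by rw [hq2']; exact lt_irrefl 0), (hd q.1 hq1).deriv]
end

section
/- Let n ≥ 1, F ∈ B_c, t > 0 and u_n(x) = ∫_ℝ F(x−ξ) Θ_t^{(n)}(ξ) dξ. Then u_n(x) → 0 as |x| → ∞. Consequently, if n ≥ 2 the improper integral of u_n over ℝ vanishes: lim_{α→−∞, β→+∞} ∫_α^β u_n(x) dx = 0. -/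
open MeasureTheory Filter Topology

/-- A continuous real function with finite limits at `±∞` is bounded. -/
lemma bdd_of_tendsto {f : ℝ → ℝ} (hf : Continuous f) {a b : ℝ}
    (h1 : Tendsto f atBot (𝓝 a)) (h2 : Tendsto f atTop (𝓝 b)) :
    ∃ C : ℝ, 0 ≤ C ∧ ∀ x, |f x| ≤ C := by
  obtain ⟨A, hA⟩ := eventually_atBot.1 (Metric.tendsto_nhds.1 h1 1 one_pos)
  obtain ⟨B, hB⟩ := eventually_atTop.1 (Metric.tendsto_nhds.1 h2 1 one_pos)
  obtain ⟨C₀, hC₀⟩ := (isCompact_Icc (a := A) (b := B)).exists_bound_of_continuousOn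
    hf.continuousOn
  refine ⟨max (max (|a| + 1) (|b| + 1)) (max C₀ 0), le_trans (le_max_right _ _)
    (le_max_right _ _), fun x => ?_⟩
  rcases le_total x A with hx | hx
  · have := hA x hx
    rw [Real.dist_eq] at this
    have : |f x| ≤ |a| + 1 := by
      calc |f x| = |f x - a + a| := by ring_nf
        _ ≤ |f x - a| + |a| := abs_add_le _ _
        _ ≤ |a| + 1 := by linarith
    exact this.trans (le_trans (le_max_left _ _) (le_max_left _ _))
  rcases le_total B x with hx' | hx'
  · have := hB x hx'
    rw [Real.dist_eq] at this
    have : |f x| ≤ |b| + 1 := by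
      calc |f x| = |f x - b + b| := by ring_nf
        _ ≤ |f x - b| + |b| := abs_add_le _ _
        _ ≤ |b| + 1 := by linarith
    exact this.trans (le_trans (le_max_right _ _) (le_max_left _ _))
  · have := hC₀ x ⟨hx, hx'⟩
    rw [Real.norm_eq_abs] at this
    exact this.trans (le_trans (le_max_left _ _) (le_max_right _ _))

/-- Derivative of a polynomial times a Gaussian. -/
lemma gauss_hasDerivAt (t : ℝ) (ht : 0 < t) (P : Polynomial ℝ) (x : ℝ) :
    HasDerivAt (fun y : ℝ => P.eval y * Real.exp (-y ^ 2 / (4 * t)))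
      ((P.derivative - (2 * t)⁻¹ • (Polynomial.X * P)).eval x *
        Real.exp (-x ^ 2 / (4 * t))) x := by
  have h4t : (4 : ℝ) * t ≠ 0 := by positivity
  have h2t : (2 : ℝ) * t ≠ 0 := by positivity
  have h1 : HasDerivAt (fun y : ℝ => -y ^ 2 / (4 * t)) (-(2 * x) / (4 * t)) x := by
    simpa using ((hasDerivAt_pow 2 x).neg).div_const (4 * t)
  have h2 := h1.exp
  have h3 := (P.hasDerivAt x).mul h2
  refine HasDerivAt.congr_deriv h3 ?_
  simp only [Polynomial.eval_sub, Polynomial.eval_smul, Polynomial.eval_mul, Polynomial.eval_X,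
    smul_eq_mul]
  field_simp
  ring

/-- Polynomial representation of the iterated heat-kernel derivatives. -/
lemma heat_rep (t : ℝ) (ht : 0 < t) (n : ℕ) :
    ∃ P : Polynomial ℝ,
      iteratedDeriv n (fun y : ℝ => heatK t y) =
        fun x => P.eval x * Real.exp (-x ^ 2 / (4 * t)) := by
  induction n with
  | zero =>
    exact ⟨Polynomial.C (Real.sqrt (4 * Real.pi * t))⁻¹, by
      funext x; simp [iteratedDeriv_zero, heatK]⟩
  | succ n ih =>
    obtain ⟨P, hP⟩ := ih
    refine ⟨P.derivative - (2 * t)⁻¹ • (Polynomial.X * P), ?_⟩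
    funext x
    rw [iteratedDeriv_succ, hP]
    exact (gauss_hasDerivAt t ht P x).deriv

lemma heat_hasDerivAt (t : ℝ) (ht : 0 < t) (n : ℕ) (x : ℝ) :
    HasDerivAt (iteratedDeriv n (fun y : ℝ => heatK t y))
      (iteratedDeriv (n + 1) (fun y : ℝ => heatK t y) x) x := by
  obtain ⟨P, hP⟩ := heat_rep t ht n
  have h := gauss_hasDerivAt t ht P x
  have hval : iteratedDeriv (n + 1) (fun y : ℝ => heatK t y) x =
      (P.derivative - (2 * t)⁻¹ • (Polynomial.X * P)).eval x * Real.exp (-x ^ 2 / (4 * t)) := by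
    rw [iteratedDeriv_succ, hP]
    exact h.deriv
  rw [hval, hP]
  exact h

/-- `P(x)·exp(−x²/d) → 0` at `±∞`. -/
lemma poly_gauss_zero (d : ℝ) (hd : 0 < d) (P : Polynomial ℝ) :
    Tendsto (fun x => P.eval x * Real.exp (-x ^ 2 / d)) atTop (𝓝 0) ∧
      Tendsto (fun x => P.eval x * Real.exp (-x ^ 2 / d)) atBot (𝓝 0) := by
  have key : ∀ Q : Polynomial ℝ,
      Tendsto (fun x => Q.eval x * Real.exp (-x ^ 2 / d)) atTop (𝓝 0) := by
    intro Q
    have h0 : Tendsto (fun x => |Q.eval x| * Real.exp (-x)) atTop (𝓝 0) := by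
      have := Q.tendsto_div_exp_atTop.abs
      simpa [abs_div, abs_mul, abs_inv, Real.abs_exp, div_eq_mul_inv, Real.exp_neg] using this
    apply squeeze_zero_norm' _ h0
    filter_upwards [eventually_ge_atTop d, eventually_ge_atTop (0 : ℝ)] with x hx hx0
    rw [Real.norm_eq_abs, abs_mul, Real.abs_exp]
    refine mul_le_mul_of_nonneg_left (Real.exp_le_exp.2 ?_) (abs_nonneg _)
    rw [neg_div, neg_le_neg_iff, le_div_iff₀ hd]
    nlinarith
  constructor
  · exact key P
  · have := (key (P.comp (-Polynomial.X))).comp tendsto_neg_atBot_atTop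
    refine this.congr fun x => ?_
    simp [Function.comp, Polynomial.eval_comp]
lemma integrable_gauss (c : ℝ) (hc : 0 < c) :
    Integrable (fun x : ℝ => Real.exp (-x ^ 2 / c)) := by
  have h := integrable_exp_neg_mul_sq (b := c⁻¹) (by positivity)
  have heq : (fun x : ℝ => Real.exp (-x ^ 2 / c)) = fun x : ℝ => Real.exp (-c⁻¹ * x ^ 2) := by
    funext x; congr 1; ring
  rw [heq]; exact h

/-- Gaussian domination of a polynomial-times-Gaussian. -/
lemma poly_gauss_bound (d : ℝ) (hd : 0 < d) (P : Polynomial ℝ) :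
    ∃ C : ℝ, 0 ≤ C ∧ ∀ x,
      |P.eval x * Real.exp (-x ^ 2 / d)| ≤ C * Real.exp (-x ^ 2 / (2 * d)) := by
  have h2d : (0 : ℝ) < 2 * d := by positivity
  obtain ⟨htop, hbot⟩ := poly_gauss_zero (2 * d) h2d P
  have hcont : Continuous fun x => P.eval x * Real.exp (-x ^ 2 / (2 * d)) :=
    P.continuous.mul (Real.continuous_exp.comp ((continuous_pow 2).neg.div_const _))
  obtain ⟨C, hC0, hC⟩ := bdd_of_tendsto hcont hbot htop
  refine ⟨C, hC0, fun x => ?_⟩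
  have hsplit : Real.exp (-x ^ 2 / d) =
      Real.exp (-x ^ 2 / (2 * d)) * Real.exp (-x ^ 2 / (2 * d)) := by
    rw [← Real.exp_add]
    congr 1
    field_simp
    ring
  rw [hsplit, ← mul_assoc, abs_mul, Real.abs_exp]
  gcongr
  exact hC x

lemma heatK_iter_cont (t : ℝ) (ht : 0 < t) (n : ℕ) :
    Continuous (iteratedDeriv n (fun y : ℝ => heatK t y)) := by
  obtain ⟨P, hP⟩ := heat_rep t ht n
  rw [hP]
  exact P.continuous.mul (Real.continuous_exp.comp ((continuous_pow 2).neg.div_const _))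

lemma heatK_iter_bound (t : ℝ) (ht : 0 < t) (n : ℕ) :
    ∃ C : ℝ, 0 ≤ C ∧ ∀ x, |iteratedDeriv n (fun y : ℝ => heatK t y) x| ≤
      C * Real.exp (-x ^ 2 / (8 * t)) := by
  obtain ⟨P, hP⟩ := heat_rep t ht n
  obtain ⟨C, hC0, hC⟩ := poly_gauss_bound (4 * t) (by positivity) P
  refine ⟨C, hC0, fun x => ?_⟩
  rw [hP]
  have h8 : (8 : ℝ) * t = 2 * (4 * t) := by ring
  rw [h8]
  exact hC x

lemma heatK_iter_integrable (t : ℝ) (ht : 0 < t) (n : ℕ) :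
    Integrable (iteratedDeriv n (fun y : ℝ => heatK t y)) := by
  obtain ⟨C, hC0, hC⟩ := heatK_iter_bound t ht n
  refine Integrable.mono' ((integrable_gauss (8 * t) (by positivity)).const_mul C)
    (heatK_iter_cont t ht n).aestronglyMeasurable ?_
  filter_upwards with x
  rw [Real.norm_eq_abs]
  exact hC x

lemma heatK_iter_tendsto (t : ℝ) (ht : 0 < t) (n : ℕ) :
    Tendsto (iteratedDeriv n (fun y : ℝ => heatK t y)) atTop (𝓝 0) ∧
      Tendsto (iteratedDeriv n (fun y : ℝ => heatK t y)) atBot (𝓝 0) := by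
  obtain ⟨P, hP⟩ := heat_rep t ht n
  rw [hP]
  exact poly_gauss_zero (4 * t) (by positivity) P

lemma heat_integral_zero (t : ℝ) (ht : 0 < t) (n : ℕ) (hn : 1 ≤ n) :
    ∫ ξ : ℝ, iteratedDeriv n (fun y : ℝ => heatK t y) ξ = 0 := by
  obtain ⟨m, rfl⟩ : ∃ m, n = m + 1 := ⟨n - 1, by omega⟩
  have hderiv : ∀ x : ℝ, HasDerivAt (iteratedDeriv m (fun y : ℝ => heatK t y))
      (iteratedDeriv (m + 1) (fun y : ℝ => heatK t y) x) x := heat_hasDerivAt t ht m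
  have hint := heatK_iter_integrable t ht (m + 1)
  obtain ⟨htop, hbot⟩ := heatK_iter_tendsto t ht m
  rw [← intervalIntegral.integral_Iic_add_Ioi (b := (0 : ℝ)) hint.integrableOn hint.integrableOn,
    integral_Ioi_of_hasDerivAt_of_tendsto' (fun x _ => hderiv x) hint.integrableOn htop,
    integral_Iic_of_hasDerivAt_of_tendsto' (fun x _ => hderiv x) hint.integrableOn hbot]
  ring

/-- Uniform Gaussian domination of a shifted kernel for `x` in a unit ball around `x₀`. -/
lemma shift_bound (t : ℝ) (ht : 0 < t) {C : ℝ} (hC0 : 0 ≤ C) {K : ℝ → ℝ}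
    (hC : ∀ y, |K y| ≤ C * Real.exp (-y ^ 2 / (8 * t))) (x₀ x η : ℝ) (hx : |x - x₀| ≤ 1) :
    |K (x - η)| ≤ C * Real.exp ((|x₀| + 1) ^ 2 / (8 * t)) * Real.exp (-η ^ 2 / (16 * t)) := by
  have hxb : x ^ 2 ≤ (|x₀| + 1) ^ 2 := by
    have h1 : |x| ≤ |x₀| + 1 := by
      have := abs_sub_abs_le_abs_sub x x₀
      linarith
    nlinarith [abs_nonneg x, neg_abs_le x, le_abs_self x, abs_nonneg x₀]
  have hkey : -(x - η) ^ 2 / (8 * t) ≤ (|x₀| + 1) ^ 2 / (8 * t) + -η ^ 2 / (16 * t) := by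
    rw [div_add_div _ _ (by positivity : (8 : ℝ) * t ≠ 0) (by positivity : (16 : ℝ) * t ≠ 0),
      div_le_div_iff₀ (by positivity) (by positivity)]
    nlinarith [mul_nonneg (sq_nonneg (2 * x - η)) (mul_pos ht ht).le,
      mul_le_mul_of_nonneg_right hxb (mul_pos ht ht).le]
  calc |K (x - η)| ≤ C * Real.exp (-(x - η) ^ 2 / (8 * t)) := hC _
    _ ≤ C * (Real.exp ((|x₀| + 1) ^ 2 / (8 * t)) * Real.exp (-η ^ 2 / (16 * t))) := by
        rw [← Real.exp_add]
        exact mul_le_mul_of_nonneg_left (Real.exp_le_exp.2 hkey) hC0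
    _ = _ := by ring

/-- The convolution `u_n(x) = ∫ F(x−ξ)Θ^{(n)}(ξ)dξ` tends to `0` at `±∞` for `n ≥ 1`. -/
lemma conv_tendsto (n : ℕ) (hn : 1 ≤ n) (F : ℝ → ℝ) (hF : memBc F) (t : ℝ) (ht : 0 < t) :
    Tendsto (fun x : ℝ => ∫ ξ : ℝ, F (x - ξ) * iteratedDeriv n (fun y : ℝ => heatK t y) ξ)
      atTop (nhds 0) ∧
    Tendsto (fun x : ℝ => ∫ ξ : ℝ, F (x - ξ) * iteratedDeriv n (fun y : ℝ => heatK t y) ξ)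
      atBot (nhds 0) := by
  obtain ⟨hFc, hFbot, L, hFtop⟩ := hF
  set K : ℝ → ℝ := iteratedDeriv n (fun y : ℝ => heatK t y) with hKdef
  obtain ⟨MF, hMF0, hMF⟩ := bdd_of_tendsto hFc hFbot hFtop
  have hKcont := heatK_iter_cont t ht n
  have hKint := heatK_iter_integrable t ht n
  have hmeas : ∀ x : ℝ, AEStronglyMeasurable (fun ξ => F (x - ξ) * K ξ) volume := fun x =>
    ((hFc.comp (continuous_const.sub continuous_id)).mul hKcont).aestronglyMeasurable
  have hbound : ∀ x : ℝ, ∀ᵐ ξ : ℝ, ‖F (x - ξ) * K ξ‖ ≤ MF * |K ξ| := by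
    intro x
    filter_upwards with ξ
    rw [Real.norm_eq_abs, abs_mul]
    exact mul_le_mul_of_nonneg_right (hMF _) (abs_nonneg _)
  have hbint : Integrable (fun ξ : ℝ => MF * |K ξ|) := hKint.abs.const_mul MF
  constructor
  · have h1 : Tendsto (fun x : ℝ => ∫ ξ : ℝ, F (x - ξ) * K ξ) atTop
        (𝓝 (∫ ξ : ℝ, L * K ξ)) := by
      refine tendsto_integral_filter_of_dominated_convergence (fun ξ => MF * |K ξ|)
        (Eventually.of_forall hmeas) (Eventually.of_forall hbound) hbint ?_
      filter_upwards with ξ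
      exact (hFtop.comp (tendsto_atTop_add_const_right atTop (-ξ) tendsto_id)).mul_const _
    have h2 : ∫ ξ : ℝ, L * K ξ = 0 := by
      rw [integral_const_mul, heat_integral_zero t ht n hn, mul_zero]
    rwa [h2] at h1
  · have h1 : Tendsto (fun x : ℝ => ∫ ξ : ℝ, F (x - ξ) * K ξ) atBot
        (𝓝 (∫ ξ : ℝ, (0 : ℝ) * K ξ)) := by
      refine tendsto_integral_filter_of_dominated_convergence (fun ξ => MF * |K ξ|)
        (Eventually.of_forall hmeas) (Eventually.of_forall hbound) hbint ?_
      filter_upwards with ξ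
      exact (hFbot.comp (tendsto_atBot_add_const_right atBot (-ξ) tendsto_id)).mul_const _
    have h2 : ∫ ξ : ℝ, (0 : ℝ) * K ξ = 0 := by simp
    rwa [h2] at h1

lemma conv_flip (F K : ℝ → ℝ) (x : ℝ) :
    ∫ ξ : ℝ, F (x - ξ) * K ξ = ∫ η : ℝ, F η * K (x - η) := by
  rw [← integral_sub_left_eq_self (fun ξ : ℝ => F (x - ξ) * K ξ) volume x]
  congr 1
  funext η
  simp

lemma conv_hasDerivAt (n : ℕ) (F : ℝ → ℝ) (hF : memBc F) (t : ℝ) (ht : 0 < t) (x₀ : ℝ) :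
    HasDerivAt (fun x : ℝ => ∫ ξ : ℝ, F (x - ξ) * iteratedDeriv n (fun y : ℝ => heatK t y) ξ)
      (∫ ξ : ℝ, F (x₀ - ξ) * iteratedDeriv (n + 1) (fun y : ℝ => heatK t y) ξ) x₀ := by
  obtain ⟨hFc, hFbot, L, hFtop⟩ := hF
  obtain ⟨MF, hMF0, hMF⟩ := bdd_of_tendsto hFc hFbot hFtop
  set K : ℝ → ℝ := iteratedDeriv n (fun y : ℝ => heatK t y) with hKdef
  set K' : ℝ → ℝ := iteratedDeriv (n + 1) (fun y : ℝ => heatK t y) with hK'def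
  obtain ⟨C, hC0, hC⟩ := heatK_iter_bound t ht n
  obtain ⟨C', hC'0, hC'⟩ := heatK_iter_bound t ht (n + 1)
  have hKcont := heatK_iter_cont t ht n
  have hK'cont := heatK_iter_cont t ht (n + 1)
  -- integrability of the shifted convolution integrand
  have hint : Integrable (fun η : ℝ => F η * K (x₀ - η)) := by
    refine Integrable.mono' ((integrable_gauss (16 * t) (by positivity)).const_mul
      (MF * (C * Real.exp ((|x₀| + 1) ^ 2 / (8 * t)))))
      ((hFc.mul (hKcont.comp (continuous_const.sub continuous_id))).aestronglyMeasurable) ?_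
    filter_upwards with η
    rw [Real.norm_eq_abs, abs_mul]
    have h := shift_bound t ht hC0 hC x₀ x₀ η (by simp)
    calc |F η| * |K (x₀ - η)|
        ≤ MF * (C * Real.exp ((|x₀| + 1) ^ 2 / (8 * t)) * Real.exp (-η ^ 2 / (16 * t))) :=
          mul_le_mul (hMF η) h (abs_nonneg _) hMF0
      _ = MF * (C * Real.exp ((|x₀| + 1) ^ 2 / (8 * t))) * Real.exp (-η ^ 2 / (16 * t)) := by
          ring
  have hbound : ∀ᵐ η : ℝ, ∀ x ∈ Metric.ball x₀ 1, ‖F η * K' (x - η)‖ ≤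
      MF * (C' * Real.exp ((|x₀| + 1) ^ 2 / (8 * t))) * Real.exp (-η ^ 2 / (16 * t)) := by
    filter_upwards with η
    intro x hx
    have hx1 : |x - x₀| ≤ 1 := by
      rw [Metric.mem_ball, Real.dist_eq] at hx
      exact hx.le
    rw [Real.norm_eq_abs, abs_mul]
    have h := shift_bound t ht hC'0 hC' x₀ x η hx1
    calc |F η| * |K' (x - η)|
        ≤ MF * (C' * Real.exp ((|x₀| + 1) ^ 2 / (8 * t)) * Real.exp (-η ^ 2 / (16 * t))) :=
          mul_le_mul (hMF η) h (abs_nonneg _) hMF0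
      _ = MF * (C' * Real.exp ((|x₀| + 1) ^ 2 / (8 * t))) * Real.exp (-η ^ 2 / (16 * t)) := by
          ring
  have hdiff : ∀ᵐ η : ℝ, ∀ x ∈ Metric.ball x₀ 1,
      HasDerivAt (fun x : ℝ => F η * K (x - η)) (F η * K' (x - η)) x := by
    filter_upwards with η
    intro x _
    have h := heat_hasDerivAt t ht n (x - η)
    have h2 : HasDerivAt (fun x : ℝ => K (x - η)) (K' (x - η)) x := by
      simpa [Function.comp_def] using h.comp x ((hasDerivAt_id x).sub_const η)
    exact h2.const_mul (F η)
  have key := hasDerivAt_integral_of_dominated_loc_of_deriv_le (μ := volume) (s := Metric.ball x₀ 1)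
    (F := fun x η => F η * K (x - η)) (F' := fun x η => F η * K' (x - η)) (Metric.ball_mem_nhds x₀ one_pos)
    (Eventually.of_forall fun x =>
      (hFc.mul (hKcont.comp (continuous_const.sub continuous_id))).aestronglyMeasurable)
    hint
    ((hFc.mul (hK'cont.comp (continuous_const.sub continuous_id))).aestronglyMeasurable)
    hbound
    ((integrable_gauss (16 * t) (by positivity)).const_mul _)
    hdiff
  have heq : (fun x : ℝ => ∫ ξ : ℝ, F (x - ξ) * K ξ) =
      fun x : ℝ => ∫ η : ℝ, F η * K (x - η) := funext (conv_flip F K)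
  rw [heq, conv_flip F K' x₀]
  exact key.2

/-- `u_n(x) = ∫ F(x−ξ)Θ_t^{(n)}(ξ)dξ → 0` as `|x| → ∞`; consequently, if `n ≥ 2`
the improper integral of `u_n` over `ℝ` vanishes. -/
theorem stmt12 (n : ℕ) (hn : 1 ≤ n) (F : ℝ → ℝ) (hF : memBc F) (t : ℝ) (ht : 0 < t) :
    Tendsto (fun x : ℝ => ∫ ξ : ℝ, F (x - ξ) * iteratedDeriv n (fun y : ℝ => heatK t y) ξ)
      atTop (nhds 0) ∧
    Tendsto (fun x : ℝ => ∫ ξ : ℝ, F (x - ξ) * iteratedDeriv n (fun y : ℝ => heatK t y) ξ)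
      atBot (nhds 0) ∧
    (2 ≤ n →
      Tendsto (fun p : ℝ × ℝ => ∫ x in p.1..p.2,
          ∫ ξ : ℝ, F (x - ξ) * iteratedDeriv n (fun y : ℝ => heatK t y) ξ)
        (atBot ×ˢ atTop) (nhds 0)) := by
  obtain ⟨h1, h2⟩ := conv_tendsto n hn F hF t ht
  refine ⟨h1, h2, ?_⟩
  intro hn2
  obtain ⟨m, rfl⟩ : ∃ m, n = m + 1 := ⟨n - 1, by omega⟩
  have hm1 : 1 ≤ m := by omega
  have hcont : Continuous (fun x : ℝ =>
      ∫ ξ : ℝ, F (x - ξ) * iteratedDeriv (m + 1) (fun y : ℝ => heatK t y) ξ) := by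
    have hd : Differentiable ℝ (fun x : ℝ =>
        ∫ ξ : ℝ, F (x - ξ) * iteratedDeriv (m + 1) (fun y : ℝ => heatK t y) ξ) := fun x =>
      (conv_hasDerivAt (m + 1) F hF t ht x).differentiableAt
    exact hd.continuous
  have key : ∀ α β : ℝ,
      (∫ x in α..β, ∫ ξ : ℝ, F (x - ξ) * iteratedDeriv (m + 1) (fun y : ℝ => heatK t y) ξ) =
        (∫ ξ : ℝ, F (β - ξ) * iteratedDeriv m (fun y : ℝ => heatK t y) ξ) -
          ∫ ξ : ℝ, F (α - ξ) * iteratedDeriv m (fun y : ℝ => heatK t y) ξ := fun α β =>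
    intervalIntegral.integral_eq_sub_of_hasDerivAt
      (fun x _ => conv_hasDerivAt m F hF t ht x) (hcont.intervalIntegrable α β)
  obtain ⟨g1, g2⟩ := conv_tendsto m hm1 F hF t ht
  have hfin := (g1.comp (tendsto_snd :
      Tendsto Prod.snd (atBot ×ˢ atTop) atTop)).sub (g2.comp (tendsto_fst :
      Tendsto Prod.fst (atBot ×ˢ atTop) atBot))
  rw [sub_zero] at hfin
  exact hfin.congr fun p => (key p.1 p.2).symm
end
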